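/- Let X ⊆ H and κ > max X, where jobs are in EDD order. Then f'_{κ+1}(X ∪ {κ}) = f'_κ(X) + p_κ, and f'_{κ+1}(X) = max{ f'_κ(X), p(J[1,κ]) − d_κ }. -/

import Mathlib

variable {n : ℕ}

/-- completion time of job `j` in the schedule given by the list `l`:
total processing time of the prefix of `l` up to and including `j`. -/
def comp (p : Fin n → ℕ) (l : List (Fin n)) (j : Fin n) : ℕ :=
  ((l.takeWhile fun k => decide (k ≠ j)).map p).sum + p j

/-- the elements of a finset listed in increasing index order. -/
def sortF (s : Finset (Fin n)) : List (Fin n) := s.sort (· ≤ ·)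

/-- a schedule is a permutation of all of the jobs. -/
def IsSchedule (l : List (Fin n)) : Prop := l.Perm (List.finRange n)

/-- the renting period of schedule `l`: from the start of the first r-job to
the completion of the last r-job. -/
def rent (p : Fin n → ℕ) (Jr : Finset (Fin n)) (hJr : Jr.Nonempty)
    (l : List (Fin n)) : ℤ :=
  (Jr.sup' hJr fun j => (comp p l j : ℤ)) -
    (Jr.inf' hJr fun j => (comp p l j : ℤ) - p j)

/-- `H`: the o-jobs with index between `α = min J^r` and `β = max J^r`. -/
def Hset (Jr : Finset (Fin n)) (hJr : Jr.Nonempty) : Finset (Fin n) :=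
  (Finset.Icc (Jr.min' hJr) (Jr.max' hJr)) \ Jr

/-- the five-block sequence `σ_{X,Y}`: blocks `J[1,α-1]`, `X`,
`J[α,β] \ (X ∪ Y)`, `Y`, `J[β+1,n]`, each internally in increasing index
(WSPT resp. EDD) order. -/
def fiveBlock (Jr : Finset (Fin n)) (hJr : Jr.Nonempty)
    (X Y : Finset (Fin n)) : List (Fin n) :=
  sortF (Finset.Iio (Jr.min' hJr)) ++ sortF X ++
    sortF ((Finset.Icc (Jr.min' hJr) (Jr.max' hJr)) \ (X ∪ Y)) ++
    sortF Y ++ sortF (Finset.Ioi (Jr.max' hJr))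

/-- `f'_κ(X) = max_{j ∈ J[α,κ-1]} (C_j^{σ_{X,∅}} - d_j)`. -/
def fDash (p : Fin n → ℕ) (d : Fin n → ℤ) (Jr : Finset (Fin n)) (hJr : Jr.Nonempty)
    (X : Finset (Fin n)) (κ : Fin n)
    (h : (Finset.Ico (Jr.min' hJr) κ).Nonempty) : ℤ :=
  (Finset.Ico (Jr.min' hJr) κ).sup' h
    (fun j => (comp p (fiveBlock Jr hJr X ∅) j : ℤ) - d j)

section helpers
variable {n : ℕ}

lemma takeWhile_append_of_mem {j : Fin n} {l₁ l₂ : List (Fin n)} (h : j ∈ l₁) :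
    (l₁ ++ l₂).takeWhile (fun k => decide (k ≠ j)) = l₁.takeWhile (fun k => decide (k ≠ j)) := by
  induction l₁ with
  | nil => simp at h
  | cons a t ih =>
      by_cases ha : a = j
      · subst ha; simp [List.takeWhile_cons]
      · have hj : j ∈ t := by
          rcases List.mem_cons.mp h with h' | h'
          · exact absurd h'.symm ha
          · exact h'
        rw [List.cons_append, List.takeWhile_cons_of_pos (by simp [ha]),
          List.takeWhile_cons_of_pos (by simp [ha]), ih hj]

lemma takeWhile_append_of_not_mem {j : Fin n} {l₁ l₂ : List (Fin n)} (h : j ∉ l₁) :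
    (l₁ ++ l₂).takeWhile (fun k => decide (k ≠ j)) =
      l₁ ++ l₂.takeWhile (fun k => decide (k ≠ j)) := by
  induction l₁ with
  | nil => simp
  | cons a t ih =>
      have ha : a ≠ j := by rintro rfl; exact h List.mem_cons_self
      have ht : j ∉ t := fun hj => h (List.mem_cons_of_mem _ hj)
      rw [List.cons_append, List.takeWhile_cons_of_pos (by simp [ha]), ih ht,
        List.cons_append]

lemma comp_append_left (p : Fin n → ℕ) {j : Fin n} {l₁ l₂ : List (Fin n)} (h : j ∈ l₁) :
    comp p (l₁ ++ l₂) j = comp p l₁ j := by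
  unfold comp; rw [takeWhile_append_of_mem h]

lemma comp_append_right (p : Fin n → ℕ) {j : Fin n} {l₁ l₂ : List (Fin n)} (h : j ∉ l₁) :
    comp p (l₁ ++ l₂) j = (l₁.map p).sum + comp p l₂ j := by
  unfold comp; rw [takeWhile_append_of_not_mem h, List.map_append, List.sum_append]; omega

lemma takeWhile_sorted_eq_filter {j : Fin n} {l : List (Fin n)} (hl : l.Pairwise (· < ·))
    (hj : j ∈ l) :
    l.takeWhile (fun k => decide (k ≠ j)) = l.filter (fun k => decide (k < j)) := by
  induction l with
  | nil => simp at hj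
  | cons a t ih =>
      rcases List.pairwise_cons.mp hl with ⟨ha, ht⟩
      by_cases haj : a = j
      · subst haj
        have hnil : t.filter (fun k => decide (k < a)) = [] := by
          apply List.filter_eq_nil_iff.mpr
          intro k hk
          simp [not_lt.mpr (ha k hk).le]
        simp [List.takeWhile_cons, List.filter_cons, hnil]
      · have hj' : j ∈ t := by
          rcases List.mem_cons.mp hj with h' | h'
          · exact absurd h'.symm haj
          · exact h'
        have haj' : a < j := ha j hj'
        rw [List.takeWhile_cons_of_pos (by simp [haj]), ih ht hj', List.filter_cons,
          if_pos (by simpa using haj')]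

lemma sum_map_sortF (f : Fin n → ℕ) (s : Finset (Fin n)) :
    ((sortF s).map f).sum = ∑ k ∈ s, f k := by
  have h := List.sum_toFinset f (Finset.sort_nodup s (· ≤ ·))
  rw [Finset.sort_toFinset] at h
  exact h.symm

lemma list_sum_map_filter (p : Fin n → ℕ) (q : Fin n → Bool) (l : List (Fin n)) :
    ((l.filter q).map p).sum = (l.map fun k => if q k then p k else 0).sum := by
  induction l with
  | nil => rfl
  | cons a t ih => by_cases h : q a <;> simp [List.filter_cons, h, ih]

lemma comp_sortF (p : Fin n → ℕ) {s : Finset (Fin n)} {j : Fin n} (hj : j ∈ s) :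
    comp p (sortF s) j = ∑ k ∈ s.filter (· ≤ j), p k := by
  have hsort : (sortF s).Pairwise (· < ·) := (Finset.sortedLT_sort s).pairwise
  have hmem : j ∈ sortF s := (Finset.mem_sort _).2 hj
  unfold comp
  rw [takeWhile_sorted_eq_filter hsort hmem, list_sum_map_filter, sum_map_sortF,
    Finset.sum_filter]
  have key : ∀ k ∈ s, (if k ≤ j then p k else 0) =
      (if (decide (k < j) : Bool) then p k else 0) + (if k = j then p k else 0) := by
    intro k _
    rcases lt_trichotomy k j with h | h | h
    · simp [h, h.le, h.ne]
    · simp [h]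
    · simp [not_lt.mpr h.le, not_le.mpr h, (ne_of_gt h)]
  rw [Finset.sum_congr rfl key, Finset.sum_add_distrib, Finset.sum_ite_eq' s j p, if_pos hj]

lemma comp_fiveBlock_mem_X (p : Fin n → ℕ) (Jr : Finset (Fin n)) (hJr : Jr.Nonempty)
    (X : Finset (Fin n)) {j : Fin n} (hj : j ∈ X) (hαj : Jr.min' hJr ≤ j) :
    comp p (fiveBlock Jr hJr X ∅) j =
      (∑ k ∈ Finset.Iio (Jr.min' hJr), p k) + ∑ k ∈ X.filter (· ≤ j), p k := by
  have hj1 : j ∉ sortF (Finset.Iio (Jr.min' hJr)) := by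
    simp [sortF, Finset.mem_sort, Finset.mem_Iio, not_lt.mpr hαj]
  have hj2 : j ∈ sortF X := by simp [sortF, Finset.mem_sort, hj]
  simp only [fiveBlock, List.append_assoc]
  rw [comp_append_right p hj1, comp_append_left p hj2, comp_sortF p hj, sum_map_sortF]

lemma comp_fiveBlock_mem_mid (p : Fin n → ℕ) (Jr : Finset (Fin n)) (hJr : Jr.Nonempty)
    (X : Finset (Fin n)) {j : Fin n}
    (hj : j ∈ Finset.Icc (Jr.min' hJr) (Jr.max' hJr)) (hjX : j ∉ X) :
    comp p (fiveBlock Jr hJr X ∅) j =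
      ((∑ k ∈ Finset.Iio (Jr.min' hJr), p k) + ∑ k ∈ X, p k) +
        ∑ k ∈ ((Finset.Icc (Jr.min' hJr) (Jr.max' hJr)) \ X).filter (· ≤ j), p k := by
  have hαj : Jr.min' hJr ≤ j := (Finset.mem_Icc.mp hj).1
  have hj1 : j ∉ sortF (Finset.Iio (Jr.min' hJr)) := by
    simp [sortF, Finset.mem_sort, Finset.mem_Iio, not_lt.mpr hαj]
  have hj2 : j ∉ sortF X := by simp [sortF, Finset.mem_sort, hjX]
  have hj3 : j ∈ sortF ((Finset.Icc (Jr.min' hJr) (Jr.max' hJr)) \ X) := by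
    simp [sortF, Finset.mem_sort, Finset.mem_sdiff, hj, hjX]
  have hjmem : j ∈ (Finset.Icc (Jr.min' hJr) (Jr.max' hJr)) \ X :=
    Finset.mem_sdiff.mpr ⟨hj, hjX⟩
  simp only [fiveBlock, Finset.union_empty, List.append_assoc]
  rw [comp_append_right p hj1, comp_append_right p hj2, comp_append_left p hj3,
    comp_sortF p hjmem, sum_map_sortF, sum_map_sortF]
  omega

end helpers

/-- for `X ⊆ H` and `κ ∈ H` with `κ > max X` (jobs in EDD order),
`f'_{κ+1}(X ∪ {κ}) = f'_κ(X) + p_κ` and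
`f'_{κ+1}(X) = max { f'_κ(X), p(J[1,κ]) - d_κ }`. -/
theorem stmt11 {n : ℕ} (p : Fin n → ℕ) (hp : ∀ j, 0 < p j)
    (d : Fin n → ℤ) (hd : Monotone d)
    (Jr : Finset (Fin n)) (hJr : Jr.Nonempty)
    (X : Finset (Fin n)) (hX : X ⊆ Hset Jr hJr)
    (κ κ' : Fin n) (hκ : κ ∈ Hset Jr hJr) (hmax : ∀ x ∈ X, x < κ)
    (hsucc : (κ' : ℕ) = (κ : ℕ) + 1)
    (h1 : (Finset.Ico (Jr.min' hJr) κ).Nonempty)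
    (h2 : (Finset.Ico (Jr.min' hJr) κ').Nonempty) :
    fDash p d Jr hJr (X ∪ {κ}) κ' h2 = fDash p d Jr hJr X κ h1 + p κ ∧
    fDash p d Jr hJr X κ' h2 =
      max (fDash p d Jr hJr X κ h1) ((∑ j ∈ Finset.Iic κ, (p j : ℤ)) - d κ) := by
  have hαJr : Jr.min' hJr ∈ Jr := Jr.min'_mem hJr
  have hβJr : Jr.max' hJr ∈ Jr := Jr.max'_mem hJr
  obtain ⟨hκIcc, hκJr⟩ := Finset.mem_sdiff.mp hκ
  obtain ⟨hακ', hκβ'⟩ := Finset.mem_Icc.mp hκIcc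
  have hακ : Jr.min' hJr < κ := lt_of_le_of_ne hακ' (fun h => hκJr (h ▸ hαJr))
  have hκβ : κ < Jr.max' hJr := lt_of_le_of_ne hκβ' (fun h => hκJr (h.symm ▸ hβJr))
  have hκX : κ ∉ X := fun h => lt_irrefl κ (hmax κ h)
  have hXIcc : ∀ x ∈ X, Jr.min' hJr ≤ x ∧ x ≤ Jr.max' hJr ∧ x ∉ Jr := by
    intro x hx
    obtain ⟨hx1, hx2⟩ := Finset.mem_sdiff.mp (hX hx)
    obtain ⟨a, b⟩ := Finset.mem_Icc.mp hx1
    exact ⟨a, b, hx2⟩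
  have hαX : Jr.min' hJr ∉ X := fun h => (hXIcc _ h).2.2 hαJr
  have hIco : ∀ j : Fin n, j ∈ Finset.Ico (Jr.min' hJr) κ' ↔
      j ∈ Finset.Ico (Jr.min' hJr) κ ∨ j = κ := by
    intro j
    simp only [Finset.mem_Ico]
    constructor
    · rintro ⟨hαj, hjκ'⟩
      rcases eq_or_lt_of_le (show j ≤ κ by
        rw [Fin.le_def]; rw [Fin.lt_def, hsucc] at hjκ'; omega) with h | h
      · exact Or.inr h
      · exact Or.inl ⟨hαj, h⟩
    · rintro (⟨hαj, hjκ⟩ | rfl)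
      · exact ⟨hαj, hjκ.trans (by rw [Fin.lt_def, hsucc]; omega)⟩
      · exact ⟨hακ.le, by rw [Fin.lt_def, hsucc]; omega⟩
  have hκmem : κ ∈ Finset.Ico (Jr.min' hJr) κ' := (hIco κ).mpr (Or.inr rfl)
  have hsub : ∀ j ∈ Finset.Ico (Jr.min' hJr) κ, j ∈ Finset.Ico (Jr.min' hJr) κ' :=
    fun j hj => (hIco j).mpr (Or.inl hj)
  have hαmem : Jr.min' hJr ∈ Finset.Ico (Jr.min' hJr) κ :=
    Finset.mem_Ico.mpr ⟨le_refl _, hακ⟩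
  have hdisjXκ : Disjoint X ({κ} : Finset (Fin n)) := by
    simp [Finset.disjoint_singleton_right, hκX]
  have hSX' : ∑ k ∈ X ∪ {κ}, p k = (∑ k ∈ X, p k) + p κ := by
    rw [Finset.sum_union hdisjXκ, Finset.sum_singleton]
  have hfilt1 : ∀ j : Fin n, j < κ →
      ((Finset.Icc (Jr.min' hJr) (Jr.max' hJr)) \ (X ∪ {κ})).filter (· ≤ j) =
        ((Finset.Icc (Jr.min' hJr) (Jr.max' hJr)) \ X).filter (· ≤ j) := by
    intro j hjκ
    ext k
    simp only [Finset.mem_filter, Finset.mem_sdiff, Finset.mem_union, Finset.mem_singleton]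
    constructor
    · rintro ⟨⟨hk, hk2⟩, hk3⟩
      exact ⟨⟨hk, fun h => hk2 (Or.inl h)⟩, hk3⟩
    · rintro ⟨⟨hk, hk2⟩, hk3⟩
      refine ⟨⟨hk, ?_⟩, hk3⟩
      rintro (h | rfl)
      · exact hk2 h
      · exact absurd hk3 (not_le.mpr hjκ)
  have hfilt2 : ∀ j : Fin n, j < κ →
      (X ∪ {κ}).filter (· ≤ j) = X.filter (· ≤ j) := by
    intro j hjκ
    ext k
    simp only [Finset.mem_filter, Finset.mem_union, Finset.mem_singleton]
    constructor
    · rintro ⟨hk | rfl, hk3⟩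
      · exact ⟨hk, hk3⟩
      · exact absurd hk3 (not_le.mpr hjκ)
    · rintro ⟨hk, hk3⟩
      exact ⟨Or.inl hk, hk3⟩
  have hfilt3 : (X ∪ {κ}).filter (· ≤ κ) = X ∪ {κ} := by
    apply Finset.filter_true_of_mem
    intro x hx
    rcases Finset.mem_union.mp hx with h | h
    · exact (hmax x h).le
    · exact le_of_eq (Finset.mem_singleton.mp h)
  have hfiltκ : ((Finset.Icc (Jr.min' hJr) (Jr.max' hJr)) \ X).filter (· ≤ κ) =
      Finset.Icc (Jr.min' hJr) κ \ X := by
    ext k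
    simp only [Finset.mem_filter, Finset.mem_sdiff, Finset.mem_Icc]
    constructor
    · rintro ⟨⟨⟨u1, u2⟩, u3⟩, u4⟩; exact ⟨⟨u1, u4⟩, u3⟩
    · rintro ⟨⟨u1, u4⟩, u3⟩; exact ⟨⟨⟨u1, u4.trans hκβ'⟩, u3⟩, u4⟩
  have hXsubIcc : X ⊆ Finset.Icc (Jr.min' hJr) κ := fun x hx =>
    Finset.mem_Icc.mpr ⟨(hXIcc x hx).1, (hmax x hx).le⟩
  have hIicsplit : Finset.Iic κ = Finset.Iio (Jr.min' hJr) ∪ Finset.Icc (Jr.min' hJr) κ := by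
    ext k
    simp only [Finset.mem_Iic, Finset.mem_union, Finset.mem_Iio, Finset.mem_Icc]
    constructor
    · intro h
      rcases lt_or_ge k (Jr.min' hJr) with h' | h'
      · exact Or.inl h'
      · exact Or.inr ⟨h', h⟩
    · rintro (h | ⟨u1, u2⟩)
      · exact h.le.trans hακ.le
      · exact u2
  have hdisjIio : Disjoint (Finset.Iio (Jr.min' hJr)) (Finset.Icc (Jr.min' hJr) κ) := by
    rw [Finset.disjoint_left]
    intro k hk hk'
    exact absurd (Finset.mem_Icc.mp hk').1 (not_le.mpr (Finset.mem_Iio.mp hk))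
  have hcompκ : comp p (fiveBlock Jr hJr X ∅) κ = ∑ k ∈ Finset.Iic κ, p k := by
    rw [comp_fiveBlock_mem_mid p Jr hJr X hκIcc hκX, hfiltκ, hIicsplit,
      Finset.sum_union hdisjIio, ← Finset.sum_sdiff hXsubIcc]
    omega
  have hcompα : (∑ k ∈ Finset.Iio (Jr.min' hJr), p k) + (∑ k ∈ X, p k) ≤
      comp p (fiveBlock Jr hJr X ∅) (Jr.min' hJr) := by
    rw [comp_fiveBlock_mem_mid p Jr hJr X
      (Finset.mem_Icc.mpr ⟨le_refl _, Finset.min'_le Jr _ hβJr⟩) hαX]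
    omega
  have hA : ∀ j : Fin n, Jr.min' hJr ≤ j → j < κ → j ∉ X →
      comp p (fiveBlock Jr hJr (X ∪ {κ}) ∅) j = comp p (fiveBlock Jr hJr X ∅) j + p κ := by
    intro j hαj hjκ hjX
    have hjIcc : j ∈ Finset.Icc (Jr.min' hJr) (Jr.max' hJr) :=
      Finset.mem_Icc.mpr ⟨hαj, (hjκ.trans hκβ).le⟩
    have hjX' : j ∉ X ∪ {κ} := by
      simp only [Finset.mem_union, Finset.mem_singleton]
      rintro (h | rfl)
      · exact hjX h
      · exact lt_irrefl j hjκ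
    rw [comp_fiveBlock_mem_mid p Jr hJr X hjIcc hjX,
      comp_fiveBlock_mem_mid p Jr hJr (X ∪ {κ}) hjIcc hjX', hSX', hfilt1 j hjκ]
    omega
  have hB : ∀ j : Fin n, j ∈ X →
      comp p (fiveBlock Jr hJr (X ∪ {κ}) ∅) j = comp p (fiveBlock Jr hJr X ∅) j := by
    intro j hjX
    have hαj : Jr.min' hJr ≤ j := (hXIcc j hjX).1
    rw [comp_fiveBlock_mem_X p Jr hJr X hjX hαj,
      comp_fiveBlock_mem_X p Jr hJr (X ∪ {κ}) (Finset.mem_union_left _ hjX) hαj,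
      hfilt2 j (hmax j hjX)]
  have hC : comp p (fiveBlock Jr hJr (X ∪ {κ}) ∅) κ =
      (∑ k ∈ Finset.Iio (Jr.min' hJr), p k) + (∑ k ∈ X, p k) + p κ := by
    rw [comp_fiveBlock_mem_X p Jr hJr (X ∪ {κ})
      (Finset.mem_union_right _ (Finset.mem_singleton_self κ)) hακ', hfilt3, hSX']
    omega
  have hBle : ∀ j : Fin n, j ∈ X → comp p (fiveBlock Jr hJr X ∅) j ≤
      (∑ k ∈ Finset.Iio (Jr.min' hJr), p k) + (∑ k ∈ X, p k) := by
    intro j hjX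
    rw [comp_fiveBlock_mem_X p Jr hJr X hjX (hXIcc j hjX).1]
    have : ∑ k ∈ X.filter (· ≤ j), p k ≤ ∑ k ∈ X, p k :=
      Finset.sum_le_sum_of_subset (Finset.filter_subset _ _)
    omega
  unfold fDash
  set g : Fin n → ℤ := fun j => (comp p (fiveBlock Jr hJr X ∅) j : ℤ) - d j with hg
  set g' : Fin n → ℤ := fun j => (comp p (fiveBlock Jr hJr (X ∪ {κ}) ∅) j : ℤ) - d j with hg'
  have hgα : ((∑ k ∈ Finset.Iio (Jr.min' hJr), p k : ℕ) : ℤ) + ((∑ k ∈ X, p k : ℕ) : ℤ)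
      - d (Jr.min' hJr) ≤ g (Jr.min' hJr) := by
    simp only [hg]
    have h' : ((∑ k ∈ Finset.Iio (Jr.min' hJr), p k : ℕ) : ℤ) + ((∑ k ∈ X, p k : ℕ) : ℤ) ≤
        (comp p (fiveBlock Jr hJr X ∅) (Jr.min' hJr) : ℤ) := by exact_mod_cast hcompα
    linarith
  have hD : ∀ j : Fin n, j ∈ X → g j ≤ g (Jr.min' hJr) := by
    intro j hjX
    have h₁ : (comp p (fiveBlock Jr hJr X ∅) j : ℤ) ≤
        ((∑ k ∈ Finset.Iio (Jr.min' hJr), p k : ℕ) : ℤ) + ((∑ k ∈ X, p k : ℕ) : ℤ) := by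
      exact_mod_cast hBle j hjX
    have h₂ : d (Jr.min' hJr) ≤ d j := hd (hXIcc j hjX).1
    have h₃ : ((∑ k ∈ Finset.Iio (Jr.min' hJr), p k : ℕ) : ℤ) + ((∑ k ∈ X, p k : ℕ) : ℤ) ≤
        (comp p (fiveBlock Jr hJr X ∅) (Jr.min' hJr) : ℤ) := by exact_mod_cast hcompα
    simp only [hg]
    linarith
  constructor
  · -- part 1
    apply le_antisymm
    · apply Finset.sup'_le
      intro j hj
      rcases (hIco j).mp hj with hj' | hjeq
      · obtain ⟨hαj, hjκ⟩ := Finset.mem_Ico.mp hj'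
        by_cases hjX : j ∈ X
        · have e1 : g' j = g j := by
            simp only [hg, hg', hB j hjX]
          have e2 := hD j hjX
          have e3 : g (Jr.min' hJr) ≤ (Finset.Ico (Jr.min' hJr) κ).sup' h1 g :=
            Finset.le_sup' g hαmem
          have e4 : (0 : ℤ) ≤ (p κ : ℤ) := by positivity
          linarith
        · have e1 : g' j = g j + p κ := by
            simp only [hg, hg']
            rw [hA j hαj hjκ hjX]
            push_cast; ring
          have e2 : g j ≤ (Finset.Ico (Jr.min' hJr) κ).sup' h1 g := Finset.le_sup' g hj'
          linarith
      · rw [hjeq]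
        have e1 : g' κ = (((∑ k ∈ Finset.Iio (Jr.min' hJr), p k : ℕ) : ℤ)
            + ((∑ k ∈ X, p k : ℕ) : ℤ) + (p κ : ℤ)) - d κ := by
          simp only [hg']
          rw [hC]; push_cast; ring
        have e3 : g (Jr.min' hJr) ≤ (Finset.Ico (Jr.min' hJr) κ).sup' h1 g :=
          Finset.le_sup' g hαmem
        have e5 : d (Jr.min' hJr) ≤ d κ := hd hακ'
        linarith [hgα]
    · have key : ∀ j ∈ Finset.Ico (Jr.min' hJr) κ,
          g j + p κ ≤ (Finset.Ico (Jr.min' hJr) κ').sup' h2 g' := by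
        intro j hj
        obtain ⟨hαj, hjκ⟩ := Finset.mem_Ico.mp hj
        by_cases hjX : j ∈ X
        · have e1 := hD j hjX
          have e2 : g' (Jr.min' hJr) = g (Jr.min' hJr) + p κ := by
            simp only [hg, hg']
            rw [hA _ (le_refl _) hακ hαX]
            push_cast; ring
          have e3 : g' (Jr.min' hJr) ≤ (Finset.Ico (Jr.min' hJr) κ').sup' h2 g' :=
            Finset.le_sup' g' (hsub _ hαmem)
          linarith
        · have e1 : g' j = g j + p κ := by
            simp only [hg, hg']
            rw [hA j hαj hjκ hjX]
            push_cast; ring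
          have e3 : g' j ≤ (Finset.Ico (Jr.min' hJr) κ').sup' h2 g' :=
            Finset.le_sup' g' (hsub j hj)
          linarith
      have hle : (Finset.Ico (Jr.min' hJr) κ).sup' h1 g ≤
          (Finset.Ico (Jr.min' hJr) κ').sup' h2 g' - p κ :=
        Finset.sup'_le _ _ fun j hj => by linarith [key j hj]
      linarith
  · -- part 2
    have hgκ : g κ = (∑ j ∈ Finset.Iic κ, (p j : ℤ)) - d κ := by
      simp only [hg]
      rw [hcompκ]; push_cast; ring
    apply le_antisymm
    · apply Finset.sup'_le
      intro j hj
      rcases (hIco j).mp hj with hj' | hjeq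
      · exact le_max_of_le_left (Finset.le_sup' g hj')
      · rw [hjeq, hgκ]
        exact le_max_right _ _
    · apply max_le
      · exact Finset.sup'_le _ _ fun j hj => Finset.le_sup' g (hsub j hj)
      · rw [← hgκ]
        exact Finset.le_sup' g hκmem
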